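/- Fix integers d ≥ k ≥ 1 and let M be a (d,k)-ary tree. The number of (d,k)-NATs of shape M equals ∏_{i=1}^d ( (w_i(M) − 1)! / ∏_{U} E_i(U) ), where for each i the inner product runs over all non-root vertices U of M whose direction contains i, E_i(U) is the number of vertices of the subtree rooted at U (including U) whose direction contains i, and w_i(M) = 1 + Σ_{π ∋ i} |D_π(M)| is the i-th coordinate of the root label. -/

import Mathlib

/-- Decreasing labelings of a forest-like set `V` under relation `r`. -/
def DecLab {α : Type*} (r : α → α → Prop) (V : Set α) : Type _ :=
  {f : α → ℕ //
    (∀ p, p ∉ V → f p = 0) ∧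
    (∀ p q, p ∈ V → q ∈ V → r p q → p ≠ q → f q < f p) ∧
    Set.InjOn f V ∧
    f '' V = Set.Icc 1 V.ncard}

section Abstract

variable {α : Type*} (r : α → α → Prop)

attribute [local instance] Classical.propDecidable

theorem decLab_finite (V : Set α) (hV : V.Finite) : Finite (DecLab r V) := by
  haveI : Finite V := hV.to_subtype
  haveI : Finite (Set.Icc 1 V.ncard : Set ℕ) := (Set.finite_Icc _ _).to_subtype
  apply Finite.of_injective (fun f : DecLab r V => fun v : V =>
    (⟨f.1 v, by
      have := Set.mem_image_of_mem f.1 v.2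
      rwa [f.2.2.2.2] at this⟩ : Set.Icc 1 V.ncard))
  intro f g h
  apply Subtype.ext; funext p
  by_cases hp : p ∈ V
  · exact congrArg Subtype.val (congrFun h ⟨p, hp⟩)
  · rw [f.2.1 p hp, g.2.1 p hp]

/-- minimum of a finite nonempty chain -/
theorem exists_min_chain (hrefl : ∀ a, r a a)
    (htrans : ∀ {a b c : α}, r a b → r b c → r a c)
    (s : Finset α) (hs : s.Nonempty)
    (htot : ∀ a ∈ s, ∀ b ∈ s, r a b ∨ r b a) :
    ∃ m ∈ s, ∀ u ∈ s, r m u := by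
  classical
  induction s using Finset.induction with
  | empty => exact absurd hs (by simp)
  | @insert b t hb ih =>
    rcases t.eq_empty_or_nonempty with rfl | ht'
    · refine ⟨b, by simp, fun u hu => ?_⟩
      rcases Finset.mem_insert.1 hu with rfl | hu
      · exact hrefl u
      · exact absurd hu (Finset.notMem_empty u)
    · obtain ⟨m, hm, hmin⟩ := ih ht' (fun x hx y hy =>
        htot x (Finset.mem_insert_of_mem hx) y (Finset.mem_insert_of_mem hy))
      rcases htot b (Finset.mem_insert_self b t) m (Finset.mem_insert_of_mem hm) with h | h
      · exact ⟨b, Finset.mem_insert_self b t, fun u hu => by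
          rcases Finset.mem_insert.1 hu with rfl | hu
          · exact hrefl u
          · exact htrans h (hmin u hu)⟩
      · exact ⟨m, Finset.mem_insert_of_mem hm, fun u hu => by
          rcases Finset.mem_insert.1 hu with rfl | hu
          · exact h
          · exact hmin u hu⟩

end Abstract

section Abstract2
variable {α : Type*} (r : α → α → Prop)
attribute [local instance] Classical.propDecidable

theorem decLab_card
    (hrefl : ∀ a, r a a)
    (htrans : ∀ {a b c : α}, r a b → r b c → r a c)
    (hanti : ∀ {a b : α}, r a b → r b a → a = b)
    (hchain : ∀ {a b c : α}, r a c → r b c → r a b ∨ r b a) :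
    ∀ (n : ℕ) (V : Finset α), V.card = n →
      Nat.card (DecLab r ↑V) * ∏ v ∈ V, (V.filter fun w => r v w).card = n.factorial := by
  intro n
  induction n using Nat.strong_induction_on with
  | _ n ih =>
  intro V hn
  match n, hn with
  | 0, hn =>
    have hV : V = ∅ := Finset.card_eq_zero.1 hn
    subst hV
    have h0 : (↑(∅ : Finset α) : Set α).ncard = 0 := by simp
    haveI : Unique (DecLab r (↑(∅ : Finset α) : Set α)) := by
      refine ⟨⟨⟨fun _ => 0, fun p _ => rfl, ?_, ?_, ?_⟩⟩, ?_⟩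
      · intro p q hp; simp at hp
      · intro p hp; simp at hp
      · rw [h0]; simp
      · intro f; apply Subtype.ext; funext p
        exact f.2.1 p (by simp)
    rw [Finset.prod_empty, mul_one, Nat.card_unique, Nat.factorial_zero]
  | (m+1), hn =>
  -- basic facts
  have hVne : V.Nonempty := Finset.card_pos.1 (by omega)
  have hncard : (↑V : Set α).ncard = (m+1) := by rw [Set.ncard_coe_finset, hn]
  -- roots
  set R : Finset α := V.filter (fun ρ => ∀ u ∈ V, r u ρ → u = ρ) with hR
  have hRmem : ∀ ρ, ρ ∈ R ↔ ρ ∈ V ∧ ∀ u ∈ V, r u ρ → u = ρ := by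
    intro ρ; rw [hR, Finset.mem_filter]
  have root_exists : ∀ w ∈ V, ∃ ρ ∈ R, r ρ w := by
    intro w hw
    obtain ⟨m', hm', hmin⟩ := exists_min_chain r hrefl @htrans
      (V.filter (fun u => r u w)) ⟨w, by simp [hw, hrefl]⟩
      (fun a ha b hb => hchain (Finset.mem_filter.1 ha).2 (Finset.mem_filter.1 hb).2)
    have hm'V := (Finset.mem_filter.1 hm').1
    have hm'w := (Finset.mem_filter.1 hm').2
    refine ⟨m', (hRmem m').2 ⟨hm'V, fun u hu hum' => ?_⟩, hm'w⟩
    exact hanti hum' (hmin u (Finset.mem_filter.2 ⟨hu, htrans hum' hm'w⟩))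
  have root_unique : ∀ ρ₁ ∈ R, ∀ ρ₂ ∈ R, ∀ w, r ρ₁ w → r ρ₂ w → ρ₁ = ρ₂ := by
    intro ρ₁ h₁ ρ₂ h₂ w hw₁ hw₂
    rcases hchain hw₁ hw₂ with h | h
    · exact (((hRmem ρ₂).1 h₂).2 ρ₁ ((hRmem ρ₁).1 h₁).1 h).symm ▸ rfl
    · exact ((hRmem ρ₁).1 h₁).2 ρ₂ ((hRmem ρ₂).1 h₂).1 h ▸ rfl
  -- hook sum over roots
  have hsum_roots : ∑ ρ ∈ R, (V.filter fun w => r ρ w).card = (m+1) := by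
    rw [← hn]
    rw [← Finset.card_biUnion]
    · congr 1
      apply Finset.ext
      intro w
      simp only [Finset.mem_biUnion, Finset.mem_filter]
      constructor
      · rintro ⟨ρ, hρ, hw, _⟩; exact hw
      · intro hw
        obtain ⟨ρ, hρ, hrw⟩ := root_exists w hw
        exact ⟨ρ, hρ, hw, hrw⟩
    · intro ρ₁ h₁ ρ₂ h₂ hne
      simp only [Finset.disjoint_left, Finset.mem_filter]
      rintro w ⟨hwV, hw₁⟩ ⟨-, hw₂⟩
      exact hne (root_unique ρ₁ h₁ ρ₂ h₂ w hw₁ hw₂)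
  -- per-root equivalence
  have key : ∀ ρ ∈ R, Nat.card {f : DecLab r (↑V : Set α) // f.1 ρ = m+1}
      = Nat.card (DecLab r ↑(V.erase ρ)) := by
    intro ρ hρ
    obtain ⟨hρV, hroot⟩ := (hRmem ρ).1 hρ
    have hWm : (↑(V.erase ρ) : Set α).ncard = m := by
      rw [Set.ncard_coe_finset, Finset.card_erase_of_mem hρV, hn]
      omega
    have hmemW : ∀ p, p ∈ (↑(V.erase ρ) : Set α) ↔ p ≠ ρ ∧ p ∈ (↑V : Set α) := by
      intro p
      simp only [Finset.coe_erase, Set.mem_diff, Set.mem_singleton_iff, Finset.mem_coe]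
      tauto
    have fwd : ∀ F : α → ℕ, (∀ p, p ∉ (↑V : Set α) → F p = 0) →
        (∀ p q, p ∈ (↑V : Set α) → q ∈ (↑V : Set α) → r p q → p ≠ q → F q < F p) →
        Set.InjOn F (↑V : Set α) →
        F '' (↑V : Set α) = Set.Icc 1 ((↑V : Set α).ncard) → F ρ = m+1 →
        (∀ p, p ∉ (↑(V.erase ρ) : Set α) → Function.update F ρ 0 p = 0) ∧
        (∀ p q, p ∈ (↑(V.erase ρ) : Set α) → q ∈ (↑(V.erase ρ) : Set α) → r p q → p ≠ q →
          Function.update F ρ 0 q < Function.update F ρ 0 p) ∧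
        Set.InjOn (Function.update F ρ 0) (↑(V.erase ρ) : Set α) ∧
        Function.update F ρ 0 '' (↑(V.erase ρ) : Set α)
          = Set.Icc 1 ((↑(V.erase ρ) : Set α).ncard) := by
      intro F hs hd hi him hFρ
      rw [hncard] at him
      have hmem : ∀ p ∈ (↑V : Set α), 1 ≤ F p ∧ F p ≤ m+1 := by
        intro p hp
        have : F p ∈ Set.Icc 1 (m+1) := him ▸ ⟨p, hp, rfl⟩
        exact this
      refine ⟨?_, ?_, ?_, ?_⟩
      · intro p hp
        by_cases hpρ : p = ρ
        · subst hpρ; exact Function.update_self _ _ _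
        · rw [Function.update_of_ne hpρ]
          exact hs p (fun hpV => hp ((hmemW p).2 ⟨hpρ, hpV⟩))
      · intro p q hp hq hpq hne
        obtain ⟨hpρ, hpV⟩ := (hmemW p).1 hp
        obtain ⟨hqρ, hqV⟩ := (hmemW q).1 hq
        rw [Function.update_of_ne hpρ, Function.update_of_ne hqρ]
        exact hd p q hpV hqV hpq hne
      · intro p hp q hq hfg
        obtain ⟨hpρ, hpV⟩ := (hmemW p).1 hp
        obtain ⟨hqρ, hqV⟩ := (hmemW q).1 hq
        rw [Function.update_of_ne hpρ, Function.update_of_ne hqρ] at hfg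
        exact hi hpV hqV hfg
      · rw [hWm]
        ext x
        simp only [Set.mem_image, Set.mem_Icc]
        constructor
        · rintro ⟨p, hp, rfl⟩
          obtain ⟨hpρ, hpV⟩ := (hmemW p).1 hp
          rw [Function.update_of_ne hpρ]
          obtain ⟨h1, h2⟩ := hmem p hpV
          have hne : F p ≠ m+1 := fun h => hpρ (hi hpV (hρV : ρ ∈ (↑V : Set α)) (h.trans hFρ.symm))
          exact ⟨h1, by omega⟩
        · rintro ⟨h1, h2⟩
          have : x ∈ Set.Icc 1 (m+1) := ⟨h1, by omega⟩
          rw [← him] at this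
          obtain ⟨p, hpV, hpx⟩ := this
          have hpρ : p ≠ ρ := by
            intro h; subst h; rw [hFρ] at hpx; omega
          exact ⟨p, (hmemW p).2 ⟨hpρ, hpV⟩, by rw [Function.update_of_ne hpρ, hpx]⟩
    have bwd : ∀ G : α → ℕ, (∀ p, p ∉ (↑(V.erase ρ) : Set α) → G p = 0) →
        (∀ p q, p ∈ (↑(V.erase ρ) : Set α) → q ∈ (↑(V.erase ρ) : Set α) → r p q → p ≠ q →
          G q < G p) →
        Set.InjOn G (↑(V.erase ρ) : Set α) →
        G '' (↑(V.erase ρ) : Set α) = Set.Icc 1 ((↑(V.erase ρ) : Set α).ncard) →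
        (∀ p, p ∉ (↑V : Set α) → Function.update G ρ (m+1) p = 0) ∧
        (∀ p q, p ∈ (↑V : Set α) → q ∈ (↑V : Set α) → r p q → p ≠ q →
          Function.update G ρ (m+1) q < Function.update G ρ (m+1) p) ∧
        Set.InjOn (Function.update G ρ (m+1)) (↑V : Set α) ∧
        Function.update G ρ (m+1) '' (↑V : Set α) = Set.Icc 1 ((↑V : Set α).ncard) := by
      intro G hs hd hi him
      rw [hWm] at him
      have hmem : ∀ p ∈ (↑(V.erase ρ) : Set α), 1 ≤ G p ∧ G p ≤ m := by
        intro p hp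
        have : G p ∈ Set.Icc 1 m := him ▸ ⟨p, hp, rfl⟩
        exact this
      refine ⟨?_, ?_, ?_, ?_⟩
      · intro p hp
        have hpρ : p ≠ ρ := fun h => hp (h ▸ (hρV : ρ ∈ (↑V : Set α)))
        rw [Function.update_of_ne hpρ]
        exact hs p (fun hpW => hp ((hmemW p).1 hpW).2)
      · intro p q hp hq hpq hne
        by_cases hqρ : q = ρ
        · subst hqρ
          exact absurd (hroot p hp hpq) hne
        · rw [Function.update_of_ne hqρ]
          by_cases hpρ : p = ρ
          · subst hpρ
            rw [Function.update_self]
            have := (hmem q ((hmemW q).2 ⟨hqρ, hq⟩)).2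
            omega
          · rw [Function.update_of_ne hpρ]
            exact hd p q ((hmemW p).2 ⟨hpρ, hp⟩) ((hmemW q).2 ⟨hqρ, hq⟩) hpq hne
      · intro p hp q hq hfg
        by_cases hpρ : p = ρ <;> by_cases hqρ : q = ρ
        · rw [hpρ, hqρ]
        · subst hpρ
          rw [Function.update_self, Function.update_of_ne hqρ] at hfg
          have := (hmem q ((hmemW q).2 ⟨hqρ, hq⟩)).2
          omega
        · subst hqρ
          rw [Function.update_self, Function.update_of_ne hpρ] at hfg
          have := (hmem p ((hmemW p).2 ⟨hpρ, hp⟩)).2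
          omega
        · rw [Function.update_of_ne hpρ, Function.update_of_ne hqρ] at hfg
          exact hi ((hmemW p).2 ⟨hpρ, hp⟩) ((hmemW q).2 ⟨hqρ, hq⟩) hfg
      · rw [hncard]
        ext x
        simp only [Set.mem_image, Set.mem_Icc]
        constructor
        · rintro ⟨p, hp, rfl⟩
          by_cases hpρ : p = ρ
          · subst hpρ; rw [Function.update_self]; omega
          · rw [Function.update_of_ne hpρ]
            have := hmem p ((hmemW p).2 ⟨hpρ, hp⟩)
            omega
        · rintro ⟨h1, h2⟩
          by_cases hxn : x = m+1
          · exact ⟨ρ, hρV, by rw [Function.update_self, hxn]⟩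
          · have : x ∈ Set.Icc 1 m := ⟨h1, by omega⟩
            rw [← him] at this
            obtain ⟨p, hpW, hpx⟩ := this
            obtain ⟨hpρ, hpV⟩ := (hmemW p).1 hpW
            exact ⟨p, hpV, by rw [Function.update_of_ne hpρ, hpx]⟩
    apply Nat.card_congr
    refine ⟨fun f => ⟨Function.update f.1.1 ρ 0,
        fwd f.1.1 f.1.2.1 f.1.2.2.1 f.1.2.2.2.1 f.1.2.2.2.2 f.2⟩,
      fun g => ⟨⟨Function.update g.1 ρ (m+1),
        bwd g.1 g.2.1 g.2.2.1 g.2.2.2.1 g.2.2.2.2⟩,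
        by exact Function.update_self ρ (m+1) g.1⟩, ?_, ?_⟩
    · intro f
      apply Subtype.ext; apply Subtype.ext
      show Function.update (Function.update f.1.1 ρ 0) ρ (m+1) = f.1.1
      rw [Function.update_idem]
      funext p
      by_cases hp : p = ρ
      · subst hp; rw [Function.update_self]; exact f.2.symm
      · rw [Function.update_of_ne hp]
    · intro g
      apply Subtype.ext
      show Function.update (Function.update g.1 ρ (m+1)) ρ 0 = g.1
      rw [Function.update_idem]
      have h0 : g.1 ρ = 0 := g.2.1 ρ (by simp)
      funext p
      by_cases hp : p = ρ
      · subst hp; rw [Function.update_self]; exact h0.symm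
      · rw [Function.update_of_ne hp]
  -- partition of labelings by the position of the maximal label
  haveI : Finite (DecLab r (↑V : Set α)) := decLab_finite r _ V.finite_toSet
  haveI : Fintype (DecLab r (↑V : Set α)) := Fintype.ofFinite _
  have hpart : Nat.card (DecLab r (↑V : Set α))
      = ∑ ρ ∈ R, Nat.card {f : DecLab r (↑V : Set α) // f.1 ρ = m+1} := by
    rw [Nat.card_eq_fintype_card]
    have hcover : (Finset.univ : Finset (DecLab r (↑V : Set α)))
        = R.biUnion (fun ρ => Finset.univ.filter
            (fun f : DecLab r (↑V : Set α) => f.1 ρ = m+1)) := by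
      apply Finset.ext
      intro f
      simp only [Finset.mem_univ, Finset.mem_biUnion, Finset.mem_filter, true_and, true_iff]
      have hmax : (m+1) ∈ Set.Icc 1 ((↑V : Set α).ncard) := by
        rw [hncard]; exact ⟨by omega, le_refl (m+1)⟩
      obtain ⟨p, hpV, hpn⟩ := (Set.ext_iff.1 f.2.2.2.2 (m+1)).2 hmax
      refine ⟨p, (hRmem p).2 ⟨hpV, fun u hu hup => ?_⟩, hpn⟩
      by_contra hne
      have h1 := f.2.2.1 u p hu hpV hup hne
      have h2 : f.1 u ∈ Set.Icc 1 ((↑V : Set α).ncard) :=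
        (Set.ext_iff.1 f.2.2.2.2 _).1 ⟨u, hu, rfl⟩
      have h4 : f.1 u ≤ m + 1 := by
        calc f.1 u ≤ ((↑V : Set α).ncard) := h2.2
          _ = m + 1 := hncard
      omega
    have hdisj : ∀ ρ₁ ∈ R, ∀ ρ₂ ∈ R, ρ₁ ≠ ρ₂ →
        Disjoint (Finset.univ.filter (fun f : DecLab r (↑V : Set α) => f.1 ρ₁ = m+1))
          (Finset.univ.filter (fun f : DecLab r (↑V : Set α) => f.1 ρ₂ = m+1)) := by
      intro ρ₁ h₁ ρ₂ h₂ hne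
      simp only [Finset.disjoint_left, Finset.mem_filter, Finset.mem_univ, true_and]
      intro f hf₁ hf₂
      apply hne
      exact f.2.2.2.1 ((hRmem ρ₁).1 h₁).1 ((hRmem ρ₂).1 h₂).1 (hf₁.trans hf₂.symm)
    calc Fintype.card (DecLab r (↑V : Set α))
        = (Finset.univ : Finset (DecLab r (↑V : Set α))).card := rfl
      _ = ∑ ρ ∈ R, (Finset.univ.filter
            (fun f : DecLab r (↑V : Set α) => f.1 ρ = m+1)).card := by
          conv_lhs => rw [hcover]
          rw [Finset.card_biUnion hdisj]
      _ = ∑ ρ ∈ R, Nat.card {f : DecLab r (↑V : Set α) // f.1 ρ = m+1} := by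
          apply Finset.sum_congr rfl
          intro ρ _
          rw [Nat.card_eq_fintype_card, Fintype.card_subtype]
  -- hook stability when erasing a root
  have hook_stable : ∀ ρ ∈ R, ∀ v ∈ V.erase ρ,
      ((V.erase ρ).filter fun w => r v w) = (V.filter fun w => r v w) := by
    intro ρ hρ v hv
    obtain ⟨hvρ, hvV⟩ := Finset.mem_erase.1 hv
    apply Finset.ext
    intro w
    simp only [Finset.mem_filter, Finset.mem_erase]
    constructor
    · rintro ⟨⟨-, hwV⟩, hvw⟩; exact ⟨hwV, hvw⟩
    · rintro ⟨hwV, hvw⟩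
      refine ⟨⟨?_, hwV⟩, hvw⟩
      intro h
      exact hvρ (((hRmem ρ).1 hρ).2 v hvV (h ▸ hvw))
  -- final computation
  have main : ∀ ρ ∈ R, Nat.card {f : DecLab r (↑V : Set α) // f.1 ρ = m+1}
      * ∏ v ∈ V, (V.filter fun w => r v w).card
      = m.factorial * (V.filter fun w => r ρ w).card := by
    intro ρ hρ
    have hρV : ρ ∈ V := ((hRmem ρ).1 hρ).1
    rw [key ρ hρ]
    rw [← Finset.mul_prod_erase V _ hρV]
    have : ∏ v ∈ V.erase ρ, (V.filter fun w => r v w).card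
        = ∏ v ∈ V.erase ρ, ((V.erase ρ).filter fun w => r v w).card :=
      Finset.prod_congr rfl (fun v hv => by rw [hook_stable ρ hρ v hv])
    rw [this]
    have hcard : (V.erase ρ).card = m := by
      rw [Finset.card_erase_of_mem hρV, hn]
      omega
    rw [← mul_assoc, mul_comm (Nat.card (DecLab r ↑(V.erase ρ)))
      (V.filter fun w => r ρ w).card, mul_assoc,
      ih m (by omega) (V.erase ρ) hcard, mul_comm]
  calc Nat.card (DecLab r (↑V : Set α)) * ∏ v ∈ V, (V.filter fun w => r v w).card
      = ∑ ρ ∈ R, (Nat.card {f : DecLab r (↑V : Set α) // f.1 ρ = m+1}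
          * ∏ v ∈ V, (V.filter fun w => r v w).card) := by
        rw [hpart, Finset.sum_mul]
    _ = ∑ ρ ∈ R, m.factorial * (V.filter fun w => r ρ w).card :=
        Finset.sum_congr rfl main
    _ = m.factorial * ∑ ρ ∈ R, (V.filter fun w => r ρ w).card := by
        rw [Finset.mul_sum]
    _ = (m+1).factorial := by
        rw [hsum_roots, Nat.factorial_succ, mul_comm]

end Abstract2

/-- A `(d,k)`-direction: a `k`-element subset of the `d` coordinates. -/
abbrev Dir (d k : ℕ) := {π : Finset (Fin d) // π.card = k}

/-- A `(d,k)`-ary tree: every vertex has at most one child for each `(d,k)`-direction. -/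
inductive KTree (d k : ℕ) : Type where
  | node : (Dir d k → Option (KTree d k)) → KTree d k

namespace KTree

variable {d k : ℕ}

/-- The subtree of a `(d,k)`-ary tree at a given position (path of directions),
if the position exists in the tree. -/
def subtreeAt : KTree d k → List (Dir d k) → Option (KTree d k)
  | t, [] => some t
  | .node c, π :: p =>
    match c π with
    | some t => subtreeAt t p
    | none => none

/-- `p` is (the position of) a vertex of `M`. -/
def isVertex (M : KTree d k) (p : List (Dir d k)) : Prop := (M.subtreeAt p).isSome

end KTree

/-- The direction of the vertex at position `p`: the direction indexing it as a child of its
parent; the root (empty position) has direction `{1,…,d}`. -/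
def dirOf {d k : ℕ} (p : List (Dir d k)) : Finset (Fin d) :=
  (p.getLast?).elim Finset.univ Subtype.val

/-- A non-ambiguous tree of dimension `(d,k)` of shape `M`: each vertex of direction `π`
carries a tuple of positive integers indexed by `π` (the root carrying a full `d`-tuple),
encoded as a function `lbl` which vanishes at the unused positions; entries strictly
decrease from ancestors to descendants, and for each coordinate `i` the `i`-th entries are
pairwise distinct and form an integer interval with minimum `1`. -/
structure KNAT (d k : ℕ) (M : KTree d k) where
  lbl : List (Dir d k) → Fin d → ℕ
  supp : ∀ p i, ¬(M.isVertex p ∧ i ∈ dirOf p) → lbl p i = 0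
  anc : ∀ p q, M.isVertex p → M.isVertex q → p <+: q → p ≠ q →
    ∀ i, i ∈ dirOf p → i ∈ dirOf q → lbl q i < lbl p i
  inj : ∀ i : Fin d, Set.InjOn (fun p => lbl p i) {p | M.isVertex p ∧ i ∈ dirOf p}
  interval : ∀ i : Fin d,
    (fun p => lbl p i) '' {p | M.isVertex p ∧ i ∈ dirOf p} =
      Set.Icc 1 (Set.ncard {p | M.isVertex p ∧ i ∈ dirOf p})

/-- The `i`-th coordinate of the root label, computed from the shape:
`w_i(M) = 1 + Σ_{π ∋ i} |D_π(M)|`. -/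
noncomputable def wgeom {d k : ℕ} (M : KTree d k) (i : Fin d) : ℕ :=
  1 + ∑ π : Dir d k,
    if i ∈ π.1 then Set.ncard {p : List (Dir d k) | M.isVertex p ∧ p.getLast? = some π}
    else 0

/-- `Esub M i u`: the number of vertices of the subtree of `M` rooted at `u` (including `u`)
whose direction contains `i`. -/
noncomputable def Esub {d k : ℕ} (M : KTree d k) (i : Fin d) (u : List (Dir d k)) : ℕ :=
  Set.ncard {v : List (Dir d k) | M.isVertex v ∧ u <+: v ∧ i ∈ dirOf v}




namespace KTree
variable {d k : ℕ}
theorem isVertex_nil (M : KTree d k) : M.isVertex [] := by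
  cases M with
  | node c => simp [isVertex, subtreeAt]

theorem isVertex_cons (c : Dir d k → Option (KTree d k)) (π : Dir d k) (q : List (Dir d k)) :
    (KTree.node c).isVertex (π :: q) ↔ ∃ t, c π = some t ∧ t.isVertex q := by
  cases h : c π with
  | none => simp [isVertex, subtreeAt, h]
  | some t =>
    simp only [isVertex, subtreeAt, h, Option.some.injEq]
    constructor
    · intro hq; exact ⟨t, rfl, hq⟩
    · rintro ⟨t', rfl, hq⟩; exact hq

theorem finite_vertexSet : ∀ M : KTree d k, {p | M.isVertex p}.Finite := fun M =>
  KTree.rec (motive_1 := fun t => {p | t.isVertex p}.Finite)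
    (motive_2 := fun o => {p | ∃ t, o = some t ∧ t.isVertex p}.Finite)
    (fun c ih => by
      have hsub : {p | (KTree.node c).isVertex p} ⊆
          insert [] (⋃ π : Dir d k, (π :: ·) '' {p | ∃ t, c π = some t ∧ t.isVertex p}) := by
        intro p hp
        match p with
        | [] => exact Set.mem_insert _ _
        | π :: q =>
          obtain ⟨t, ht, hv⟩ := (isVertex_cons c π q).1 hp
          exact Set.mem_insert_of_mem _
            (Set.mem_iUnion.2 ⟨π, ⟨q, ⟨t, ht, hv⟩, rfl⟩⟩)
      exact Set.Finite.subset
        ((Set.finite_iUnion (fun π => (ih π).image _)).insert []) hsub)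
    (by simp)
    (fun t iht => by
      have h : {p | ∃ t', (some t : Option (KTree d k)) = some t' ∧ t'.isVertex p}
          = {p | t.isVertex p} := by
        ext p; simp
      show {p | ∃ t', (some t : Option (KTree d k)) = some t' ∧ t'.isVertex p}.Finite
      rw [h]; exact iht)
    M
end KTree


attribute [local instance 2000] Classical.propDecidable

/-- The set of vertices of `M` whose direction contains `i`. -/
def VSet {d k : ℕ} (M : KTree d k) (i : Fin d) : Set (List (Dir d k)) :=
  {p | M.isVertex p ∧ i ∈ dirOf p}

def knatEquiv {d k : ℕ} (M : KTree d k) :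
    KNAT d k M ≃ ∀ i : Fin d, DecLab (fun p q : List (Dir d k) => p <+: q) (VSet M i) where
  toFun N i := ⟨fun p => N.lbl p i,
    fun p hp => N.supp p i hp,
    fun p q hp hq hpq hne => N.anc p q hp.1 hq.1 hpq hne i hp.2 hq.2,
    N.inj i, N.interval i⟩
  invFun g := ⟨fun p i => (g i).1 p,
    fun p i hpi => (g i).2.1 p hpi,
    fun p q hp hq hpq hne i hip hiq => (g i).2.2.1 p q ⟨hp, hip⟩ ⟨hq, hiq⟩ hpq hne,
    fun i => (g i).2.2.2.1,
    fun i => (g i).2.2.2.2⟩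
  left_inv N := rfl
  right_inv g := rfl

/-- hook formula for `(d,k)`-NATs of a fixed shape `M`:
`|NAT_{d,k}(M)| = ∏_{i=1}^d (w_i(M)−1)! / ∏_U E_i(U)`, the inner product running over the
non-root vertices `U` of `M` whose direction contains `i`. -/
theorem knat_card_hook_formula (d k : ℕ) (hk : 1 ≤ k) (hkd : k ≤ d) (M : KTree d k) :
    (Nat.card (KNAT d k M) : ℚ) =
      ∏ i : Fin d,
        (((wgeom M i - 1).factorial : ℚ) /
          ∏ᶠ u ∈ {p : List (Dir d k) | M.isVertex p ∧ p ≠ [] ∧ i ∈ dirOf p},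
            (Esub M i u : ℚ)) := by
  classical
  have hfinV : ∀ i : Fin d, (VSet M i).Finite := fun i =>
    (KTree.finite_vertexSet M).subset (fun p hp => hp.1)
  -- Finset of vertices containing i
  set F : Fin d → Finset (List (Dir d k)) := fun i => (hfinV i).toFinset with hF
  have hmemF : ∀ i p, p ∈ F i ↔ M.isVertex p ∧ i ∈ dirOf p := by
    intro i p; rw [hF]; exact (hfinV i).mem_toFinset
  have hcoeF : ∀ i, (↑(F i) : Set (List (Dir d k))) = VSet M i := fun i =>
    (hfinV i).coe_toFinset
  have hnil : ∀ i, [] ∈ F i := by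
    intro i
    rw [hmemF]
    refine ⟨KTree.isVertex_nil M, ?_⟩
    simp [dirOf]
  have hpos : ∀ i, 1 ≤ (F i).card := fun i => Finset.card_pos.2 ⟨[], hnil i⟩
  -- hooks are the Esub numbers
  have hhook : ∀ i, ∀ v ∈ F i, ((F i).filter fun w => v <+: w).card = Esub M i v := by
    intro i v _
    rw [Esub, ← Set.ncard_coe_finset]
    congr 1
    ext w
    simp only [Finset.coe_filter, Set.mem_setOf_eq, hmemF]
    tauto
  -- positivity of hooks
  have hEpos : ∀ i, ∀ v ∈ F i, 1 ≤ Esub M i v := by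
    intro i v hv
    rw [← hhook i v hv]
    refine Finset.card_pos.2 ⟨v, Finset.mem_filter.2 ⟨hv, List.prefix_refl v⟩⟩
  -- hook at the root is the total count
  have hroot_hook : ∀ i, ((F i).filter fun w => [] <+: w).card = (F i).card := by
    intro i
    congr 1
    apply Finset.filter_true_of_mem
    intro w _
    exact List.nil_prefix
  -- main abstract count
  have hmain : ∀ i : Fin d,
      Nat.card (DecLab (fun p q : List (Dir d k) => p <+: q) (VSet M i))
        * ((F i).card * ∏ v ∈ (F i).erase [], Esub M i v) = ((F i).card).factorial := by
    intro i
    have h := decLab_card (fun p q : List (Dir d k) => p <+: q)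
      (fun a => List.prefix_refl a)
      (fun {a b c} h1 h2 => h1.trans h2)
      (fun {a b} h1 h2 => h1.eq_of_length (le_antisymm h1.length_le h2.length_le))
      (fun {a b c} h1 h2 => List.prefix_or_prefix_of_prefix h1 h2)
      ((F i).card) (F i) rfl
    rw [hcoeF i] at h
    rw [← h, ← Finset.mul_prod_erase (F i) _ (hnil i)]
    congr 1
    congr 1
    · rw [Finset.filter_congr_decidable]
      exact (hroot_hook i).symm
    · refine Finset.prod_congr rfl (fun v hv => ?_)
      rw [Finset.filter_congr_decidable]
      exact (hhook i v (Finset.mem_of_mem_erase hv)).symm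
  -- wgeom equals the total count
  have hw : ∀ i : Fin d, wgeom M i = (F i).card := by
    intro i
    have hG : ∀ π : Dir d k,
        Set.ncard {p : List (Dir d k) | M.isVertex p ∧ p.getLast? = some π}
        = ((KTree.finite_vertexSet M).toFinset.filter
            (fun p => p.getLast? = some π)).card := by
      intro π
      rw [← Set.ncard_coe_finset]
      congr 1
      ext p
      simp only [Finset.coe_filter, Set.mem_setOf_eq, Set.Finite.mem_toFinset]
    have hsplit : (F i).card = 1 + ((F i).erase []).card := by
      rw [Finset.card_erase_of_mem (hnil i)]
      have := hpos i
      omega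
    have hbi : (F i).erase []
        = (Finset.univ.filter (fun π : Dir d k => i ∈ π.1)).biUnion
            (fun π => (KTree.finite_vertexSet M).toFinset.filter
              (fun p => p.getLast? = some π)) := by
      apply Finset.ext
      intro p
      simp only [Finset.mem_erase, Finset.mem_biUnion, Finset.mem_filter,
        Finset.mem_univ, true_and, hmemF, Set.Finite.mem_toFinset]
      constructor
      · rintro ⟨hne, hv, hi⟩
        have hsome : p.getLast?.isSome := List.getLast?_isSome.2 hne
        obtain ⟨π, hπ⟩ := Option.isSome_iff_exists.1 hsome
        have hd : dirOf p = π.1 := by rw [dirOf, hπ]; rfl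
        refine ⟨π, ?_, hv, hπ⟩
        rw [← hd]; exact hi
      · rintro ⟨π, hiπ, hv, hπ⟩
        have hne : p ≠ [] := by
          intro h; subst h; simp at hπ
        have hd : dirOf p = π.1 := by rw [dirOf, hπ]; rfl
        exact ⟨hne, hv, by rw [hd]; exact hiπ⟩
    have hdisj : ∀ π₁ ∈ Finset.univ.filter (fun π : Dir d k => i ∈ π.1),
        ∀ π₂ ∈ Finset.univ.filter (fun π : Dir d k => i ∈ π.1), π₁ ≠ π₂ →
        Disjoint ((KTree.finite_vertexSet M).toFinset.filter
              (fun p => p.getLast? = some π₁))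
          ((KTree.finite_vertexSet M).toFinset.filter
              (fun p => p.getLast? = some π₂)) := by
      intro π₁ _ π₂ _ hne
      simp only [Finset.disjoint_left, Finset.mem_filter]
      rintro p ⟨-, h₁⟩ ⟨-, h₂⟩
      rw [h₁] at h₂
      exact hne (Option.some.inj h₂)
    rw [wgeom, hsplit]
    congr 1
    rw [hbi, Finset.card_biUnion hdisj, Finset.sum_filter]
    apply Finset.sum_congr rfl
    intro π _
    by_cases hiπ : i ∈ π.1
    · rw [if_pos hiπ, if_pos hiπ, hG π]
    · rw [if_neg hiπ, if_neg hiπ]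
  -- rewrite the finprod as a finset product
  have hfp : ∀ i : Fin d,
      (∏ᶠ u ∈ {p : List (Dir d k) | M.isVertex p ∧ p ≠ [] ∧ i ∈ dirOf p}, (Esub M i u : ℚ))
      = ∏ u ∈ (F i).erase [], (Esub M i u : ℚ) := by
    intro i
    have hset : {p : List (Dir d k) | M.isVertex p ∧ p ≠ [] ∧ i ∈ dirOf p}
        = ↑((F i).erase []) := by
      ext p
      simp only [Set.mem_setOf_eq, Finset.coe_erase, Set.mem_diff,
        Set.mem_singleton_iff, Finset.mem_coe, hmemF]
      tauto
    rw [hset, finprod_mem_coe_finset]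
  -- count of KNAT
  haveI : ∀ i : Fin d, Finite (DecLab (fun p q : List (Dir d k) => p <+: q) (VSet M i)) :=
    fun i => decLab_finite _ _ (hfinV i)
  have hcard : Nat.card (KNAT d k M)
      = ∏ i : Fin d, Nat.card (DecLab (fun p q : List (Dir d k) => p <+: q) (VSet M i)) := by
    rw [Nat.card_congr (knatEquiv M), Nat.card_pi]
  rw [hcard, Nat.cast_prod]
  apply Finset.prod_congr rfl
  intro i _
  rw [hfp i, hw i]
  -- per-factor identity in ℚ
  set C := Nat.card (DecLab (fun p q : List (Dir d k) => p <+: q) (VSet M i)) with hC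
  set H := ∏ v ∈ (F i).erase [], Esub M i v with hH
  have hfc : C * ((F i).card * H) = ((F i).card).factorial := hmain i
  have hfac : ((F i).card).factorial = (F i).card * ((F i).card - 1).factorial := by
    rw [Nat.mul_factorial_pred (by have := hpos i; omega)]
  have hCH : C * H = ((F i).card - 1).factorial := by
    have h1 : (F i).card * (C * H) = (F i).card * ((F i).card - 1).factorial := by
      rw [← hfac, ← hfc]; ring
    exact Nat.eq_of_mul_eq_mul_left (hpos i) h1
  have hHpos : 0 < H := by
    rw [hH]
    apply Finset.prod_pos
    intro v hv
    exact hEpos i v (Finset.mem_of_mem_erase hv)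
  have hHQ : (∏ u ∈ (F i).erase [], (Esub M i u : ℚ)) = (H : ℚ) := by
    rw [hH, Nat.cast_prod]
  rw [hHQ]
  rw [eq_div_iff (by exact_mod_cast hHpos.ne')]
  exact_mod_cast hCH
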